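/- Let Ω = [a,b] ⊂ ℝ be a compact interval with a < b, and μ₋, μ₊ > 0. Define R : W^{1,2}(Ω,ℝ) → ℝ by R(u) = ∫_Ω (μ₊ u⁺(ξ) − μ₋ u⁻(ξ)) dξ, where u⁺, u⁻ are positive and negative parts. Then for every x ∈ W^{1,2}(Ω,ℝ), the function λ ↦ R(x + λ) on ℝ (adding the constant function λ) has a unique minimizer. -/

import Mathlib

open MeasureTheory

private lemma f_conv {μm μp : ℝ} (hm : 0 ≤ μm) (hp : 0 ≤ μp) (u v : ℝ) :
    μp * max ((u + v) / 2) 0 - μm * min ((u + v) / 2) 0 ≤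
      ((μp * max u 0 - μm * min u 0) + (μp * max v 0 - μm * min v 0)) / 2 := by
  have h1 : max ((u + v) / 2) 0 ≤ (max u 0 + max v 0) / 2 := by
    apply max_le
    · nlinarith [le_max_left u 0, le_max_left v 0]
    · nlinarith [le_max_right u 0, le_max_right v 0]
  have h2 : (min u 0 + min v 0) / 2 ≤ min ((u + v) / 2) 0 := by
    apply le_min
    · nlinarith [min_le_left u 0, min_le_left v 0]
    · nlinarith [min_le_right u 0, min_le_right v 0]
  nlinarith [mul_le_mul_of_nonneg_left h1 hp, mul_le_mul_of_nonneg_left h2 hm]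

private lemma f_strict {μm μp : ℝ} (hm : 0 < μm) (hp : 0 < μp) {u v : ℝ}
    (hu : u < 0) (hv : 0 < v) :
    μp * max ((u + v) / 2) 0 - μm * min ((u + v) / 2) 0 <
      ((μp * max u 0 - μm * min u 0) + (μp * max v 0 - μm * min v 0)) / 2 := by
  rw [max_eq_right hu.le, min_eq_left hu.le, max_eq_left hv.le, min_eq_right hv.le]
  rcases le_total ((u + v) / 2) 0 with h | h
  · rw [max_eq_right h, min_eq_left h]; nlinarith
  · rw [max_eq_left h, min_eq_right h]; nlinarith

private lemma min_sub_min_abs (u v : ℝ) : |min u 0 - min v 0| ≤ |u - v| := by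
  have key : ∀ w : ℝ, min w 0 = -max (-w) 0 := by
    intro w
    rcases le_total w 0 with h | h
    · rw [min_eq_left h, max_eq_left (by linarith), neg_neg]
    · rw [min_eq_right h, max_eq_right (by linarith), neg_zero]
  have h3 := abs_max_sub_max_le_abs (-v) (-u) 0
  calc |min u 0 - min v 0| = |max (-v) 0 - max (-u) 0| := by
        rw [key u, key v]; congr 1; ring
    _ ≤ |(-v) - (-u)| := h3
    _ = |u - v| := by congr 1; ring

private lemma f_lip {μm μp : ℝ} (hm : 0 ≤ μm) (hp : 0 ≤ μp) (u v : ℝ) :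
    |(μp * max u 0 - μm * min u 0) - (μp * max v 0 - μm * min v 0)| ≤
      (μp + μm) * |u - v| := by
  have h1 := abs_max_sub_max_le_abs u v 0
  have h2 := min_sub_min_abs u v
  calc |(μp * max u 0 - μm * min u 0) - (μp * max v 0 - μm * min v 0)|
      = |μp * (max u 0 - max v 0) + (-μm) * (min u 0 - min v 0)| := by congr 1; ring
    _ ≤ |μp * (max u 0 - max v 0)| + |(-μm) * (min u 0 - min v 0)| := abs_add_le _ _
    _ = μp * |max u 0 - max v 0| + μm * |min u 0 - min v 0| := by
        rw [abs_mul, abs_mul, abs_of_nonneg hp, abs_neg, abs_of_nonneg hm]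
    _ ≤ (μp + μm) * |u - v| := by nlinarith [abs_nonneg (u - v)]

private lemma f_lb {μm μp : ℝ} (hm : 0 < μm) (hp : 0 < μp) (u : ℝ) :
    min μp μm * |u| ≤ μp * max u 0 - μm * min u 0 := by
  rcases le_total u 0 with h | h
  · rw [max_eq_right h, min_eq_left h, abs_of_nonpos h]
    nlinarith [min_le_right μp μm]
  · rw [max_eq_left h, min_eq_right h, abs_of_nonneg h]
    nlinarith [min_le_left μp μm]

private lemma eqzero_of_integral_zero {a b : ℝ} (hab : a < b) {h : ℝ → ℝ}
    (hc : ContinuousOn h (Set.Icc a b)) (hnn : ∀ ξ ∈ Set.Icc a b, 0 ≤ h ξ)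
    (hi : (∫ ξ in Set.Icc a b, h ξ) = 0) : ∀ ξ ∈ Set.Icc a b, h ξ = 0 := by
  intro ξ₀ hξ₀
  by_contra hne
  have hpos : 0 < h ξ₀ := lt_of_le_of_ne (hnn ξ₀ hξ₀) (Ne.symm hne)
  have hev : ∀ᶠ ξ in nhdsWithin ξ₀ (Set.Icc a b), 0 < h ξ :=
    (hc ξ₀ hξ₀).eventually (eventually_gt_nhds hpos)
  rw [eventually_nhdsWithin_iff] at hev
  obtain ⟨ε, hε, hball⟩ := Metric.eventually_nhds_iff.mp hev
  have hlt : max a (ξ₀ - ε) < min b (ξ₀ + ε) := by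
    obtain ⟨h1, h2⟩ := hξ₀
    exact max_lt (lt_min hab (by linarith)) (lt_min (by linarith) (by linarith))
  have hsub : Set.Ioo (max a (ξ₀ - ε)) (min b (ξ₀ + ε)) ⊆
      Function.support h ∩ Set.Icc a b := by
    intro t ht
    obtain ⟨ht1, ht2⟩ := ht
    have hta : a ≤ t := le_of_lt (lt_of_le_of_lt (le_max_left _ _) ht1)
    have htb : t ≤ b := le_of_lt (lt_of_lt_of_le ht2 (min_le_left _ _))
    have htd : dist t ξ₀ < ε := by
      rw [Real.dist_eq, abs_lt]
      constructor
      · have := lt_of_le_of_lt (le_max_right a (ξ₀ - ε)) ht1; linarith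
      · have := lt_of_lt_of_le ht2 (min_le_right b (ξ₀ + ε)); linarith
    exact ⟨ne_of_gt (hball htd ⟨hta, htb⟩), hta, htb⟩
  have hμ : 0 < volume (Function.support h ∩ Set.Icc a b) := by
    refine lt_of_lt_of_le ?_ (measure_mono hsub)
    rw [Real.volume_Ioo]
    exact ENNReal.ofReal_pos.mpr (by linarith)
  have hint : IntegrableOn h (Set.Icc a b) volume :=
    hc.integrableOn_compact isCompact_Icc
  have : 0 < ∫ ξ in Set.Icc a b, h ξ := by
    rw [setIntegral_pos_iff_support_of_nonneg_ae ?_ hint]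
    · exact hμ
    · filter_upwards [ae_restrict_mem measurableSet_Icc] with ξ hξ using hnn ξ hξ
  rw [hi] at this
  exact lt_irrefl 0 this

/-- Homogeneous continuous crawler: with strictly positive friction coefficients,
for every `x ∈ W^{1,2}([a,b])` the map `λ ↦ R(x + λ)` has a unique minimizer. -/
theorem stmt11 (a b : ℝ) (hab : a < b) (μm μp : ℝ) (hm : 0 < μm) (hp : 0 < μp)
    (x : ℝ → ℝ)
    (hx : ∃ g : ℝ → ℝ, MemLp g 2 (volume.restrict (Set.Icc a b)) ∧
      ∀ t ∈ Set.Icc a b, x t = x a + ∫ s in a..t, g s) :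
    ∃! lam : ℝ, ∀ lam' : ℝ,
      (∫ ξ in Set.Icc a b, (μp * max (x ξ + lam) 0 - μm * min (x ξ + lam) 0)) ≤
      (∫ ξ in Set.Icc a b, (μp * max (x ξ + lam') 0 - μm * min (x ξ + lam') 0)) := by
  obtain ⟨g, hg2, hxg⟩ := hx
  have hIcc : MeasurableSet (Set.Icc a b) := measurableSet_Icc
  have hba : (0:ℝ) ≤ b - a := by linarith
  haveI : IsFiniteMeasure (volume.restrict (Set.Icc a b)) := by
    constructor
    rw [Measure.restrict_apply_univ, Real.volume_Icc]
    exact ENNReal.ofReal_lt_top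
  have hg1 : IntegrableOn g (Set.Icc a b) volume := hg2.integrable one_le_two
  have hcx : ContinuousOn x (Set.Icc a b) := by
    have hprim : ContinuousOn (fun t => ∫ s in a..t, g s) (Set.Icc a b) := by
      have := intervalIntegral.continuousOn_primitive_interval
        (a := a) (b := b) (μ := volume) (f := g) (by rwa [Set.uIcc_of_le hab.le])
      rwa [Set.uIcc_of_le hab.le] at this
    exact (continuousOn_const.add hprim).congr hxg
  have hfc : Continuous (fun u : ℝ => μp * max u 0 - μm * min u 0) :=
    (continuous_const.mul (continuous_id.max continuous_const)).sub
      (continuous_const.mul (continuous_id.min continuous_const))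
  have hcont : ∀ lam : ℝ, ContinuousOn
      (fun ξ => μp * max (x ξ + lam) 0 - μm * min (x ξ + lam) 0) (Set.Icc a b) :=
    fun lam => hfc.comp_continuousOn (hcx.add continuousOn_const)
  have hint : ∀ lam : ℝ, IntegrableOn
      (fun ξ => μp * max (x ξ + lam) 0 - μm * min (x ξ + lam) 0) (Set.Icc a b) volume :=
    fun lam => (hcont lam).integrableOn_compact isCompact_Icc
  set F : ℝ → ℝ :=
    fun lam => ∫ ξ in Set.Icc a b, (μp * max (x ξ + lam) 0 - μm * min (x ξ + lam) 0)
    with hF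
  show ∃! lam : ℝ, ∀ lam' : ℝ, F lam ≤ F lam'
  have hlipF : ∀ l₁ l₂ : ℝ, |F l₁ - F l₂| ≤ ((μp + μm) * (b - a)) * |l₁ - l₂| := by
    intro l₁ l₂
    simp only [hF]
    rw [← integral_sub (hint l₁) (hint l₂)]
    have h1 := norm_integral_le_integral_norm (μ := volume.restrict (Set.Icc a b))
      (f := fun ξ => (μp * max (x ξ + l₁) 0 - μm * min (x ξ + l₁) 0) -
        (μp * max (x ξ + l₂) 0 - μm * min (x ξ + l₂) 0))
    rw [Real.norm_eq_abs] at h1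
    have h2 : (∫ ξ in Set.Icc a b, ‖(μp * max (x ξ + l₁) 0 - μm * min (x ξ + l₁) 0) -
          (μp * max (x ξ + l₂) 0 - μm * min (x ξ + l₂) 0)‖) ≤
        ∫ _ξ in Set.Icc a b, ((μp + μm) * |l₁ - l₂|) := by
      refine setIntegral_mono_on ((hint l₁).sub (hint l₂)).norm (integrable_const _) hIcc ?_
      intro ξ _
      rw [Real.norm_eq_abs]
      have := f_lip hm.le hp.le (x ξ + l₁) (x ξ + l₂)
      simpa [add_sub_add_left_eq_sub] using this
    have h3 : (∫ _ξ in Set.Icc a b, ((μp + μm) * |l₁ - l₂|)) =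
        ((μp + μm) * (b - a)) * |l₁ - l₂| := by
      rw [setIntegral_const, Real.volume_real_Icc_of_le hab.le, smul_eq_mul]
      ring
    linarith
  have hFcont : Continuous F := by
    have hK : (0:ℝ) ≤ (μp + μm) * (b - a) := by positivity
    have : LipschitzWith ⟨(μp + μm) * (b - a), hK⟩ F :=
      LipschitzWith.of_dist_le_mul fun l₁ l₂ => by
        rw [Real.dist_eq, Real.dist_eq]; exact hlipF l₁ l₂
    exact this.continuous
  set m : ℝ := min μp μm with hmdef
  have hm' : 0 < m := lt_min hp hm
  have habsx : IntegrableOn (fun ξ => |x ξ|) (Set.Icc a b) volume :=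
    hcx.abs.integrableOn_compact isCompact_Icc
  set C : ℝ := ∫ ξ in Set.Icc a b, |x ξ| with hC
  have hC0 : 0 ≤ C := setIntegral_nonneg hIcc fun ξ _ => abs_nonneg _
  have hcoer : ∀ lam : ℝ, m * |lam| * (b - a) - m * C ≤ F lam := by
    intro lam
    have hi1 : IntegrableOn (fun ξ => m * |x ξ + lam|) (Set.Icc a b) volume :=
      (continuousOn_const.mul (hcx.add continuousOn_const).abs).integrableOn_compact
        isCompact_Icc
    have h1 : (∫ ξ in Set.Icc a b, m * |x ξ + lam|) ≤ F lam := by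
      simp only [hF]
      exact setIntegral_mono_on hi1 (hint lam) hIcc fun ξ _ => f_lb hm hp _
    have hi2 : IntegrableOn (fun ξ => m * (|lam| - |x ξ|)) (Set.Icc a b) volume :=
      ((integrable_const _).sub habsx).const_mul m
    have h2 : (∫ ξ in Set.Icc a b, m * (|lam| - |x ξ|)) ≤
        ∫ ξ in Set.Icc a b, m * |x ξ + lam| := by
      refine setIntegral_mono_on hi2 hi1 hIcc ?_
      intro ξ _
      have habs : |lam| ≤ |x ξ + lam| + |x ξ| := by
        have := abs_add_le (x ξ + lam) (-(x ξ))
        simpa using this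
      nlinarith [hm'.le]
    have h3 : (∫ ξ in Set.Icc a b, m * (|lam| - |x ξ|)) =
        m * |lam| * (b - a) - m * C := by
      have hfe : (fun ξ => m * (|lam| - |x ξ|)) = fun ξ => m * |lam| - m * |x ξ| := by
        funext ξ; ring
      rw [hfe, integral_sub (integrable_const _) (habsx.const_mul m),
        integral_const_mul m, setIntegral_const, Real.volume_real_Icc_of_le hab.le,
        smul_eq_mul]
      rw [hC, integral_const_mul]
      ring
    linarith
  set K : ℝ := (|F 0| + 1 + m * C) / (m * (b - a)) with hK
  have hmb : 0 < m * (b - a) := by nlinarith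
  have hK0 : 0 ≤ K := div_nonneg (by positivity) hmb.le
  have hKeq : m * K * (b - a) = |F 0| + 1 + m * C := by
    rw [hK, show m * ((|F 0| + 1 + m * C) / (m * (b - a))) * (b - a) = (|F 0| + 1 + m * C) / (m * (b - a)) * (m * (b - a)) by ring, div_mul_cancel₀ _ hmb.ne']
  have hbig : ∀ lam : ℝ, K < |lam| → F 0 < F lam := by
    intro lam hlam
    have h1 := hcoer lam
    have h2 : m * K * (b - a) < m * |lam| * (b - a) := by nlinarith
    nlinarith [le_abs_self (F 0)]
  obtain ⟨lam₀, hlam₀mem, hminK⟩ :=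
    isCompact_Icc.exists_isMinOn (s := Set.Icc (-K) K)
      ⟨0, by constructor <;> linarith⟩ hFcont.continuousOn
  have hglobal : ∀ lam' : ℝ, F lam₀ ≤ F lam' := by
    intro lam'
    by_cases hmem : lam' ∈ Set.Icc (-K) K
    · exact isMinOn_iff.mp hminK lam' hmem
    · have hKl : K < |lam'| := by
        by_contra hle
        push_neg at hle
        exact hmem (Set.mem_Icc.mpr (abs_le.mp hle))
      exact le_trans (isMinOn_iff.mp hminK 0 (Set.mem_Icc.mpr ⟨by linarith, hK0⟩))
        (hbig lam' hKl).le
  refine ⟨lam₀, hglobal, ?_⟩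
  intro y hy
  by_contra hne
  set l1 : ℝ := min y lam₀ with hl1
  set l2 : ℝ := max y lam₀ with hl2
  have hl12 : l1 < l2 := min_lt_max.mpr hne
  have hmin1 : ∀ l' : ℝ, F l1 ≤ F l' := by
    rcases min_choice y lam₀ with h | h
    · rw [hl1, h]; exact hy
    · rw [hl1, h]; exact hglobal
  have hmin2 : ∀ l' : ℝ, F l2 ≤ F l' := by
    rcases max_choice y lam₀ with h | h
    · rw [hl2, h]; exact hy
    · rw [hl2, h]; exact hglobal
  set lm : ℝ := (l1 + l2) / 2 with hlm
  have emid : ∀ ξ : ℝ, x ξ + lm = ((x ξ + l1) + (x ξ + l2)) / 2 := by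
    intro ξ; rw [hlm]; ring
  have hptconv : ∀ ξ : ℝ,
      μp * max (x ξ + lm) 0 - μm * min (x ξ + lm) 0 ≤
        ((μp * max (x ξ + l1) 0 - μm * min (x ξ + l1) 0) +
         (μp * max (x ξ + l2) 0 - μm * min (x ξ + l2) 0)) / 2 := by
    intro ξ
    rw [emid ξ]
    exact f_conv hm.le hp.le _ _
  have hintavg : IntegrableOn (fun ξ =>
      ((μp * max (x ξ + l1) 0 - μm * min (x ξ + l1) 0) +
       (μp * max (x ξ + l2) 0 - μm * min (x ξ + l2) 0)) / 2) (Set.Icc a b) volume :=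
    ((hint l1).add (hint l2)).div_const 2
  have hconvF : F lm ≤ (F l1 + F l2) / 2 := by
    have h1 : F lm ≤ ∫ ξ in Set.Icc a b,
        (((μp * max (x ξ + l1) 0 - μm * min (x ξ + l1) 0) +
          (μp * max (x ξ + l2) 0 - μm * min (x ξ + l2) 0)) / 2) :=
      setIntegral_mono_on (hint lm) hintavg hIcc fun ξ _ => hptconv ξ
    have h2 : (∫ ξ in Set.Icc a b,
        (((μp * max (x ξ + l1) 0 - μm * min (x ξ + l1) 0) +
          (μp * max (x ξ + l2) 0 - μm * min (x ξ + l2) 0)) / 2)) = (F l1 + F l2) / 2 := by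
      rw [MeasureTheory.integral_div, integral_add (hint l1) (hint l2)]
    linarith
  have hF21 : F l2 = F l1 := le_antisymm (hmin2 l1) (hmin1 l2)
  have hFlm : F lm = F l1 := by
    refine le_antisymm ?_ (hmin1 lm)
    rw [hF21] at hconvF
    linarith
  set D : ℝ → ℝ := fun ξ =>
    ((μp * max (x ξ + l1) 0 - μm * min (x ξ + l1) 0) +
     (μp * max (x ξ + l2) 0 - μm * min (x ξ + l2) 0)) / 2 -
      (μp * max (x ξ + lm) 0 - μm * min (x ξ + lm) 0) with hD
  have hDcont : ContinuousOn D (Set.Icc a b) :=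
    (((hcont l1).add (hcont l2)).div_const 2).sub (hcont lm)
  have hDnn : ∀ ξ ∈ Set.Icc a b, 0 ≤ D ξ := fun ξ _ => by
    simp only [hD]
    linarith [hptconv ξ]
  have hDint : (∫ ξ in Set.Icc a b, D ξ) = 0 := by
    simp only [hD]
    rw [integral_sub hintavg (hint lm), MeasureTheory.integral_div,
      integral_add (hint l1) (hint l2)]
    simp only [hF] at hF21 hFlm
    linarith
  have hDzero := eqzero_of_integral_zero hab hDcont hDnn hDint
  have hdich : ∀ ξ ∈ Set.Icc a b, 0 ≤ x ξ + l1 ∨ x ξ + l2 ≤ 0 := by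
    intro ξ hξ
    by_contra hcon
    push_neg at hcon
    obtain ⟨h1, h2⟩ := hcon
    have hs := f_strict hm hp h1 h2
    have hz := hDzero ξ hξ
    simp only [hD] at hz
    rw [emid ξ] at hz
    linarith
  have hcase : (∀ ξ ∈ Set.Icc a b, 0 ≤ x ξ + l1) ∨ (∀ ξ ∈ Set.Icc a b, x ξ + l2 ≤ 0) := by
    by_contra hcon
    push_neg at hcon
    obtain ⟨⟨ξB, hξB, hB⟩, ⟨ξA, hξA, hA⟩⟩ := hcon
    have hB2 : x ξB + l2 ≤ 0 := by
      rcases hdich ξB hξB with h | h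
      · linarith
      · exact h
    have hA1 : 0 ≤ x ξA + l1 := by
      rcases hdich ξA hξA with h | h
      · exact h
      · linarith
    set c : ℝ := -(l1 + l2) / 2 with hc
    have hcA : c < x ξA := by rw [hc]; linarith
    have hcB : x ξB < c := by rw [hc]; linarith
    have hsub : Set.uIcc ξA ξB ⊆ Set.Icc a b := Set.uIcc_subset_Icc hξA hξB
    have hmem : c ∈ Set.uIcc (x ξA) (x ξB) := by
      rw [Set.mem_uIcc]
      right
      exact ⟨hcB.le, hcA.le⟩
    obtain ⟨ξ, hξ, hxξ⟩ := intermediate_value_uIcc (hcx.mono hsub) hmem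
    have hξI := hsub hξ
    rcases hdich ξ hξI with h | h
    · rw [hxξ, hc] at h; linarith
    · rw [hxξ, hc] at h; linarith
  rcases hcase with hall | hall
  · have hkey : F l2 - F l1 = μp * (l2 - l1) * (b - a) := by
      simp only [hF]
      rw [← integral_sub (hint l2) (hint l1)]
      have heq : Set.EqOn (fun ξ => (μp * max (x ξ + l2) 0 - μm * min (x ξ + l2) 0) -
          (μp * max (x ξ + l1) 0 - μm * min (x ξ + l1) 0))
          (fun _ => μp * (l2 - l1)) (Set.Icc a b) := by
        intro ξ hξ
        have h1 := hall ξ hξ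
        have h2 : 0 ≤ x ξ + l2 := by linarith
        simp only
        rw [max_eq_left h1, min_eq_right h1, max_eq_left h2, min_eq_right h2]
        ring
      rw [setIntegral_congr_fun hIcc heq, setIntegral_const, Real.volume_real_Icc_of_le hab.le,
        smul_eq_mul]
      ring
    have hle := hmin2 l1
    nlinarith [mul_pos (mul_pos hp (show (0:ℝ) < l2 - l1 by linarith)) (show (0:ℝ) < b - a by linarith)]
  · have hkey : F l1 - F l2 = μm * (l2 - l1) * (b - a) := by
      simp only [hF]
      rw [← integral_sub (hint l1) (hint l2)]
      have heq : Set.EqOn (fun ξ => (μp * max (x ξ + l1) 0 - μm * min (x ξ + l1) 0) -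
          (μp * max (x ξ + l2) 0 - μm * min (x ξ + l2) 0))
          (fun _ => μm * (l2 - l1)) (Set.Icc a b) := by
        intro ξ hξ
        have h2 := hall ξ hξ
        have h1 : x ξ + l1 ≤ 0 := by linarith
        simp only
        rw [max_eq_right h1, min_eq_left h1, max_eq_right h2, min_eq_left h2]
        ring
      rw [setIntegral_congr_fun hIcc heq, setIntegral_const, Real.volume_real_Icc_of_le hab.le,
        smul_eq_mul]
      ring
    have hle := hmin1 l2
    nlinarith [mul_pos (mul_pos hm (show (0:ℝ) < l2 - l1 by linarith)) (show (0:ℝ) < b - a by linarith)]
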